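/- arXiv:2506.12828 — 6 statements merged into one kernel-verified Lean document; each statement's English description precedes it below -/
import Mathlib

section
/- Let U be finite, 𝒞 ⊆ 2^U, and f : 2^U → ℝ non-decreasing and ε-approximately 𝒞-submodular. Let S ∈ D_f with f(S) = f_max and δ_min > 0. Then for every C ⊆ U with f(C) = f_max that admits an ordering c_1,…,c_{|C|} with every prefix C_i ∈ 𝒞, it holds |S| < (1 + ε/δ_min + ln(δ_max/δ_min))·|C| + 1. -/
/-- The prefix `{s_1, …, s_k}` of an ordered family `s : Fin n → U`. -/
def prefixSet {U : Type*} [DecidableEq U] {n : ℕ} (s : Fin n → U) (k : ℕ) : Finset U :=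
  (Finset.univ.filter (fun j : Fin n => (j : ℕ) < k)).image s

section helpers
variable {U : Type*} [DecidableEq U] {n : ℕ}

lemma prefixSet_zero (s : Fin n → U) : prefixSet s 0 = ∅ := by
  simp [prefixSet]

lemma prefixSet_succ (s : Fin n → U) (k : ℕ) (hk : k < n) :
    prefixSet s (k + 1) = insert (s ⟨k, hk⟩) (prefixSet s k) := by
  unfold prefixSet
  rw [← Finset.image_insert]
  congr 1
  ext j
  simp [Nat.lt_succ_iff_lt_or_eq, Fin.ext_iff, or_comm]
  exact le_iff_eq_or_lt

lemma not_mem_prefixSet_self (s : Fin n → U) (hinj : Function.Injective s)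
    (k : ℕ) (hk : k < n) : s ⟨k, hk⟩ ∉ prefixSet s k := by
  unfold prefixSet
  simp only [Finset.mem_image, Finset.mem_filter, Finset.mem_univ, true_and]
  rintro ⟨j, hj, hje⟩
  have := hinj hje
  subst this
  simp at hj

lemma prefixSet_card (s : Fin n → U) (hinj : Function.Injective s) :
    (prefixSet s n).card = n := by
  unfold prefixSet
  rw [Finset.card_image_of_injective _ hinj]
  simp
end helpers

/-- greedy approximation bound for non-decreasing
ε-approximately 𝒞-submodular functions, for optimal sets C all of whose
prefixes (for some ordering) lie in 𝒞:
|S| < (1 + ε/δ_min + ln(δ_max/δ_min))·|C| + 1. -/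
theorem stmt6 {U : Type*} [Fintype U] [DecidableEq U] [Nonempty U]
    (𝒞 : Set (Finset U))
    (f : Finset U → ℝ) (ε : ℝ) (hε : 0 ≤ ε)
    (hmono : ∀ A B : Finset U, A ⊆ B → f A ≤ f B)
    (happrox : ∀ A : Finset U, ∀ B ∈ 𝒞, ∀ x ∉ B,
      f (insert x (A ∪ B)) - f (A ∪ B) ≤ f (insert x A) - f A + ε)
    {n : ℕ} (s : Fin n → U) (hinj : Function.Injective s)
    (hgreedy : ∀ i : Fin n, ∀ u : U,
      f (insert u (prefixSet s i)) - f (prefixSet s i) ≤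
        f (insert (s i) (prefixSet s i)) - f (prefixSet s i))
    (fmax : ℝ) (hfmax : ∀ X : Finset U, f X ≤ fmax)
    (hS : f (prefixSet s n) = fmax)
    (dmin dmax : ℝ) (hdminpos : 0 < dmin)
    (hdmin : IsLeast
      {d : ℝ | ∃ i : Fin n, d = f (insert (s i) (prefixSet s i)) - f (prefixSet s i)} dmin)
    (hdmax : IsGreatest (Set.range fun x : U => f {x} - f ∅) dmax)
    (C : Finset U) (hC : f C = fmax)
    {m : ℕ} (c : Fin m → U) (hcinj : Function.Injective c)
    (hCorder : prefixSet c m = C)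
    (hpref : ∀ j ≤ m, prefixSet c j ∈ 𝒞) :
    (n : ℝ) < (1 + ε / dmin + Real.log (dmax / dmin)) * C.card + 1 := by
  classical
  -- basic positivity facts
  obtain ⟨⟨i0, hdmin_mem⟩, hdmin_lb⟩ := hdmin
  have hn0 : 0 < n := i0.pos
  have hδmin : ∀ i : Fin n,
      dmin ≤ f (insert (s i) (prefixSet s (i : ℕ))) - f (prefixSet s (i : ℕ)) :=
    fun i => hdmin_lb ⟨i, rfl⟩
  have hdd : dmin ≤ dmax := by
    have h1 := hδmin ⟨0, hn0⟩
    have h2 := hdmax.2 ⟨s ⟨0, hn0⟩, rfl⟩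
    simp only [prefixSet_zero] at h1
    simpa using h1.trans h2
  have hm0 : 0 < m := by
    by_contra hm
    have hm' : m = 0 := by omega
    subst hm'
    have hCempty : C = (∅ : Finset U) := by rw [← hCorder, prefixSet_zero]
    have h1 := hδmin ⟨0, hn0⟩
    simp only [prefixSet_zero] at h1
    have h2 : f (insert (s ⟨0, hn0⟩) (∅ : Finset U)) ≤ fmax := hfmax _
    rw [← hC, hCempty] at h2
    linarith
  have hMpos : (0 : ℝ) < (m : ℝ) := by exact_mod_cast hm0
  have h1m : (0 : ℝ) ≤ 1 - 1 / (m : ℝ) := by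
    have hm1 : (1 : ℝ) ≤ (m : ℝ) := by exact_mod_cast hm0
    have : 1 / (m : ℝ) ≤ 1 := by rw [div_le_one hMpos]; exact hm1
    linarith
  have hdmaxpos : 0 < dmax := lt_of_lt_of_le hdminpos hdd
  -- key telescoping lemma
  have key : ∀ (A : Finset U) (d : ℝ), (∀ x : U, f (insert x A) - f A ≤ d) →
      f (A ∪ C) - f A ≤ (m : ℝ) * (d + ε) := by
    intro A d hd
    have main : ∀ j ≤ m, f (A ∪ prefixSet c j) - f A ≤ (j : ℝ) * (d + ε) := by
      intro j hj
      induction j with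
      | zero => simp [prefixSet_zero]
      | succ k ih =>
        have hk : k < m := by omega
        have ih' := ih (by omega)
        have hrw : A ∪ prefixSet c (k + 1) = insert (c ⟨k, hk⟩) (A ∪ prefixSet c k) := by
          rw [prefixSet_succ c k hk, Finset.union_insert]
        have happ := happrox A (prefixSet c k) (hpref k (by omega)) (c ⟨k, hk⟩)
          (not_mem_prefixSet_self c hcinj k hk)
        have hdk := hd (c ⟨k, hk⟩)
        rw [hrw]
        push_cast
        linarith
    have := main m le_rfl
    rw [hCorder] at this
    exact this
  -- the gain of each greedy step dominates 1/m of the remaining gap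
  have hgap : ∀ (k : ℕ) (hk : k < n),
      fmax - f (prefixSet s k) ≤
        (m : ℝ) * ((f (insert (s ⟨k, hk⟩) (prefixSet s k)) - f (prefixSet s k)) + ε) := by
    intro k hk
    have hkey := key (prefixSet s k)
      (f (insert (s ⟨k, hk⟩) (prefixSet s k)) - f (prefixSet s k))
      (fun u => hgreedy ⟨k, hk⟩ u)
    have hsub : f C ≤ f (prefixSet s k ∪ C) := hmono _ _ Finset.subset_union_right
    rw [hC] at hsub
    linarith
  -- each step gains at least dmin
  have hstep : ∀ (k : ℕ) (hk : k < n),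
      f (prefixSet s (k + 1)) =
        f (prefixSet s k) + (f (insert (s ⟨k, hk⟩) (prefixSet s k)) - f (prefixSet s k)) := by
    intro k hk
    rw [prefixSet_succ s k hk]
    ring
  -- geometric decay of (gap - m ε)
  have hdecay : ∀ k ≤ n,
      fmax - f (prefixSet s k) - (m : ℝ) * ε ≤ (1 - 1 / m) ^ k * ((m : ℝ) * dmax) := by
    intro k hk
    induction k with
    | zero =>
      have h0 := key ∅ dmax (fun x => by simpa using hdmax.2 ⟨x, rfl⟩)
      simp only [Finset.empty_union, hC] at h0
      simp only [pow_zero, one_mul, prefixSet_zero]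
      linarith
    | succ k ih =>
      have hkn : k < n := by omega
      have ih' := ih (by omega)
      set δ := f (insert (s ⟨k, hkn⟩) (prefixSet s k)) - f (prefixSet s k) with hδ
      have h1 := hgap k hkn
      have h2 := hstep k hkn
      have hXδ : fmax - f (prefixSet s k) - (m : ℝ) * ε ≤ (m : ℝ) * δ := by
        rw [hδ]; linarith
      have hXdiv : (fmax - f (prefixSet s k) - (m : ℝ) * ε) / (m : ℝ) ≤ δ :=
        (div_le_iff₀ hMpos).mpr (by linarith)
      have hcontr : fmax - f (prefixSet s (k + 1)) - (m : ℝ) * ε ≤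
          (1 - 1 / m) * (fmax - f (prefixSet s k) - (m : ℝ) * ε) := by
        rw [h2]
        have hdiv : (1 - 1 / (m : ℝ)) * (fmax - f (prefixSet s k) - (m : ℝ) * ε) =
            (fmax - f (prefixSet s k) - (m : ℝ) * ε) -
              (fmax - f (prefixSet s k) - (m : ℝ) * ε) / m := by ring
        rw [hdiv]
        linarith [hXdiv, hδ.ge, hδ.le]
      calc fmax - f (prefixSet s (k + 1)) - (m : ℝ) * ε
          ≤ (1 - 1 / m) * (fmax - f (prefixSet s k) - (m : ℝ) * ε) := hcontr
        _ ≤ (1 - 1 / m) * ((1 - 1 / m) ^ k * ((m : ℝ) * dmax)) :=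
            mul_le_mul_of_nonneg_left ih' h1m
        _ = (1 - 1 / m) ^ (k + 1) * ((m : ℝ) * dmax) := by ring
  -- Claim 1: while the gap is large, k is bounded by m log(dmax/dmin)
  have claim1 : ∀ k ≤ n, (m : ℝ) * (dmin + ε) < fmax - f (prefixSet s k) →
      (k : ℝ) < (m : ℝ) * Real.log (dmax / dmin) := by
    intro k hk hbig
    have hdec := hdecay k hk
    have hexp1 : (1 - 1 / (m : ℝ)) ≤ Real.exp (-(1 / m)) := by
      have := Real.add_one_le_exp (-(1 / (m : ℝ)))
      linarith
    have hexpk : (1 - 1 / (m : ℝ)) ^ k ≤ Real.exp (-(1 / m)) ^ k :=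
      pow_le_pow_left₀ h1m hexp1 k
    have hexpk' : Real.exp (-(1 / (m : ℝ))) ^ k = Real.exp (-(k / m)) := by
      rw [← Real.exp_nat_mul]
      congr 1
      ring
    have hchain : (m : ℝ) * dmin < Real.exp (-(k / m)) * ((m : ℝ) * dmax) := by
      have h1 : (m : ℝ) * dmin < (1 - 1 / (m : ℝ)) ^ k * ((m : ℝ) * dmax) := by nlinarith
      have h2 : (1 - 1 / (m : ℝ)) ^ k * ((m : ℝ) * dmax) ≤
          Real.exp (-(k / m)) * ((m : ℝ) * dmax) := by
        rw [← hexpk']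
        exact mul_le_mul_of_nonneg_right hexpk (by positivity)
      linarith
    have hdd2 : dmin < Real.exp (-(k / m)) * dmax := by
      have h4 : (m : ℝ) * dmin < (m : ℝ) * (Real.exp (-(k / m)) * dmax) := by
        nlinarith [hchain]
      exact lt_of_mul_lt_mul_left h4 hMpos.le
    have hexplt : Real.exp ((k : ℝ) / m) < dmax / dmin := by
      rw [lt_div_iff₀ hdminpos]
      have := mul_lt_mul_of_pos_left hdd2 (Real.exp_pos ((k : ℝ) / m))
      calc Real.exp ((k : ℝ) / m) * dmin
          < Real.exp ((k : ℝ) / m) * (Real.exp (-(k / m)) * dmax) := this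
        _ = dmax := by rw [← mul_assoc, ← Real.exp_add]; simp
    have := (Real.lt_log_iff_exp_lt (by positivity)).mpr hexplt
    rw [div_lt_iff₀ hMpos] at this
    linarith
  -- gap decreases by at least dmin each step
  have hdrop : ∀ j ≤ n, ∀ k ≤ j,
      fmax - f (prefixSet s j) ≤ (fmax - f (prefixSet s k)) - ((j : ℝ) - k) * dmin := by
    intro j hj
    induction j with
    | zero => intro k hk; interval_cases k; norm_num
    | succ j ih =>
      intro k hk
      rcases Nat.lt_or_ge k (j + 1) with hlt | hge
      · have hkj : k ≤ j := by omega
        have ih' := ih (by omega) k hkj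
        have hjn : j < n := by omega
        have h2 := hstep j hjn
        have h3 : dmin ≤ f (insert (s ⟨j, hjn⟩) (prefixSet s j)) - f (prefixSet s j) :=
          hδmin ⟨j, hjn⟩
        push_cast
        rw [h2]
        linarith
      · have : k = j + 1 := by omega
        subst this
        simp
  -- Claim 2: once the gap is small, few steps remain
  have claim2 : ∀ k ≤ n, fmax - f (prefixSet s k) ≤ (m : ℝ) * (dmin + ε) →
      (n : ℝ) ≤ (k : ℝ) + (m : ℝ) * (1 + ε / dmin) := by
    intro k hk hsmall
    have h1 := hdrop n le_rfl k hk
    rw [hS] at h1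
    have h2 : ((n : ℝ) - k) * dmin ≤ (m : ℝ) * dmin + (m : ℝ) * ε := by linarith
    have h3 : ((m : ℝ) * (1 + ε / dmin)) * dmin = (m : ℝ) * dmin + (m : ℝ) * ε := by
      field_simp
    have h4 : ((n : ℝ) - k) * dmin ≤ ((m : ℝ) * (1 + ε / dmin)) * dmin := by
      rw [h3]; exact h2
    have := le_of_mul_le_mul_right h4 hdminpos
    linarith
  -- put things together
  have hcard : (C.card : ℝ) = (m : ℝ) := by
    rw [← hCorder, prefixSet_card c hcinj]
  rw [hcard]
  have hlog0 : 0 ≤ Real.log (dmax / dmin) :=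
    Real.log_nonneg ((one_le_div hdminpos).mpr hdd)
  have hP : ∃ k, k ≤ n ∧ fmax - f (prefixSet s k) ≤ (m : ℝ) * (dmin + ε) :=
    ⟨n, le_rfl, by
      rw [hS]
      have : (0 : ℝ) ≤ (m : ℝ) * (dmin + ε) := by positivity
      linarith⟩
  have htn := (Nat.find_spec hP).1
  have htsmall := (Nat.find_spec hP).2
  set t := Nat.find hP with ht
  rcases Nat.eq_zero_or_pos t with ht0 | htpos
  · have h2 := claim2 t htn htsmall
    rw [ht0] at h2
    push_cast at h2
    have hlm : 0 ≤ Real.log (dmax / dmin) * (m : ℝ) := mul_nonneg hlog0 hMpos.le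
    nlinarith [h2, hlm]
  · have hlt : t - 1 < t := by omega
    have hnot := Nat.find_min hP hlt
    push_neg at hnot
    have hbig := hnot (by omega)
    have hc1 := claim1 (t - 1) (by omega) hbig
    have hc2 := claim2 t htn htsmall
    rw [Nat.cast_sub htpos] at hc1
    push_cast at hc1
    nlinarith [hc1, hc2]
end

section
/- For the fault-tolerant total domination potential f(A) = Σ_{v∈V} m_A(v), for every A ⊆ V and x ∈ V \ A it holds f(A ∪ {x}) = f(A) + |N_{V\K(A)}(x)| + t_A(x), where K(A) = {v : m_A(v) = m}, and t_A(x) = 0 if x ∈ K(A); t_A(x) = m − |N_A(x)| if x ∉ K(A) and |N_A(x)| > 0; t_A(x) = m − 1 if x ∉ K(A) and |N_A(x)| = 0. -/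
open Finset

/-- The potential m_A(v) for fault-tolerant total domination. -/
def mPot {V : Type*} [Fintype V] [DecidableEq V]
    (G : SimpleGraph V) [DecidableRel G.Adj] (m : ℕ) (A : Finset V) (v : V) : ℕ :=
  if (v ∉ A ∧ m ≤ (A.filter (G.Adj v)).card) ∨ (v ∈ A ∧ 0 < (A.filter (G.Adj v)).card)
  then m
  else if v ∈ A ∧ (A.filter (G.Adj v)).card = 0 then m - 1
  else (A.filter (G.Adj v)).card

/-- Fault-tolerant total domination potential f(A) = Σ_v m_A(v). -/
def fFT {V : Type*} [Fintype V] [DecidableEq V]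
    (G : SimpleGraph V) [DecidableRel G.Adj] (m : ℕ) (A : Finset V) : ℝ :=
  ∑ v, (mPot G m A v : ℝ)

/-- K(A) = {v : m_A(v) = m}. -/
def KsetM {V : Type*} [Fintype V] [DecidableEq V]
    (G : SimpleGraph V) [DecidableRel G.Adj] (m : ℕ) (A : Finset V) : Finset V :=
  univ.filter (fun v => mPot G m A v = m)

/-- The correction term t_A(x). -/
def tPot {V : Type*} [Fintype V] [DecidableEq V]
    (G : SimpleGraph V) [DecidableRel G.Adj] (m : ℕ) (A : Finset V) (x : V) : ℕ :=
  if x ∈ KsetM G m A then 0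
  else if 0 < (A.filter (G.Adj x)).card then m - (A.filter (G.Adj x)).card
  else m - 1

lemma key {V : Type*} [Fintype V] [DecidableEq V]
    (G : SimpleGraph V) [DecidableRel G.Adj]
    (m : ℕ) (hm : 1 ≤ m) (A : Finset V) (x : V) (hx : x ∉ A) (v : V) :
    mPot G m (insert x A) v =
      mPot G m A v + (if v ∈ (univ \ KsetM G m A).filter (G.Adj x) then 1 else 0)
        + (if v = x then tPot G m A x else 0) := by
  have hmem : v ∈ (univ \ KsetM G m A).filter (G.Adj x) ↔
      (¬ mPot G m A v = m) ∧ G.Adj x v := by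
    simp [KsetM, and_comm]
  by_cases hvx : v = x
  · subst hvx
    have hna : ¬ G.Adj v v := G.irrefl
    have hc' : (insert v A).filter (G.Adj v) = A.filter (G.Adj v) := by
      rw [filter_insert, if_neg hna]
    simp only [hmem, hna, and_false, if_false, if_true, add_zero]
    simp only [mPot, tPot, KsetM, hc', mem_insert, mem_filter, mem_univ, true_and, hx,
      or_true, true_and]
    set c := (A.filter (G.Adj v)).card with hc
    by_cases h0 : 0 < c
    · have h1 : ¬ c = 0 := by omega
      simp only [h0, and_true, h1, and_false, or_false, if_false, if_true, not_true,
        not_false_iff, true_and]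
      by_cases hmc : m ≤ c
      · simp [hmc, hm]
      · have : ¬ c = m := by omega
        simp [hmc, this, h0, hx, mPot, ← hc]
        omega
    · have h1 : c = 0 := by omega
      have hmc : ¬ m ≤ c := by omega
      simp only [h1, lt_irrefl, and_false, or_false, false_or, hmc, false_and, if_false,
        and_self, if_true, true_and]
      have : ¬ (0:ℕ) = m := by omega
      have hm0 : ¬ m = 0 := by omega
      simp [this, hm0, hx, mPot, ← hc, h1]
  · simp only [hvx, if_false, add_zero]
    by_cases hadj : G.Adj x v
    · have hc' : ((insert x A).filter (G.Adj v)).card = (A.filter (G.Adj v)).card + 1 := by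
        rw [filter_insert, if_pos (G.adj_symm hadj), card_insert_of_notMem (by simp [hx])]
      have hvA : v ∈ insert x A ↔ v ∈ A := by simp [hvx]
      simp only [mPot, hmem, hadj, and_true, hc', hvA]
      set c := (A.filter (G.Adj v)).card with hc
      by_cases hA : v ∈ A
      · by_cases h0 : 0 < c
        · have h1 : ¬ c = 0 := by omega
          simp only [hA, h0, and_true, or_true, if_true, not_true, if_false, add_zero,
            Nat.lt_irrefl]
          simp
        · have h1 : c = 0 := by omega
          simp only [h1, hA, not_true, false_and, and_false, or_false, and_self, if_true,
            Nat.lt_irrefl, and_true, or_true, if_false, false_or]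
          have : ¬ m - 1 = m := by omega
          simp [this, hA]
          omega
      · by_cases hmc : m ≤ c
        · have hmc' : m ≤ c + 1 := by omega
          simp [hA, hmc, hmc', hm]
        · have hne : ¬ c = m := by omega
          by_cases hmc' : m ≤ c + 1
          · have : m = c + 1 := by omega
            simp [hA, hmc, hmc', hne, this]
          · simp [hA, hmc, hmc', hne]
    · have hc' : ((insert x A).filter (G.Adj v)) = (A.filter (G.Adj v)) := by
        rw [filter_insert, if_neg (fun h => hadj (G.adj_symm h))]
      have hvA : v ∈ insert x A ↔ v ∈ A := by simp [hvx]
      simp only [hmem, hadj, and_false, if_false, add_zero, mPot, hc', hvA]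

/-- f(A ∪ {x}) = f(A) + |N_{V\K(A)}(x)| + t_A(x). -/
theorem stmt10 {V : Type*} [Fintype V] [DecidableEq V]
    (G : SimpleGraph V) [DecidableRel G.Adj]
    (m : ℕ) (hm : 1 ≤ m) (A : Finset V) (x : V) (hx : x ∉ A) :
    fFT G m (insert x A) =
      fFT G m A + (((univ \ KsetM G m A).filter (G.Adj x)).card : ℝ) +
        (tPot G m A x : ℝ) := by
  have hnat : ∑ v, mPot G m (insert x A) v =
      ∑ v, mPot G m A v + ((univ \ KsetM G m A).filter (G.Adj x)).card + tPot G m A x := by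
    calc ∑ v, mPot G m (insert x A) v
        = ∑ v, (mPot G m A v + (if v ∈ (univ \ KsetM G m A).filter (G.Adj x) then 1 else 0)
            + (if v = x then tPot G m A x else 0)) := by
          exact Finset.sum_congr rfl fun v _ => key G m hm A x hx v
      _ = _ := by
          rw [Finset.sum_add_distrib, Finset.sum_add_distrib]
          congr 1
          · congr 1
            rw [Finset.sum_ite_mem, Finset.univ_inter, Finset.sum_const, smul_eq_mul, mul_one]
          · rw [Finset.sum_ite_eq' Finset.univ x, if_pos (Finset.mem_univ x)]
  unfold fFT
  rw [← Nat.cast_sum, ← Nat.cast_sum, hnat]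
  push_cast
  ring
end

section
/- The fault-tolerant total domination potential f(A) = Σ_{v∈V} m_A(v) is monotone non-decreasing and submodular on subsets of V. -/
open Finset

section Aux

variable {V : Type*} [Fintype V] [DecidableEq V] (G : SimpleGraph V) [DecidableRel G.Adj]

lemma mPot_eq (m : ℕ) (A : Finset V) (v : V) :
    mPot G m A v = if v ∈ A then (if (A.filter (G.Adj v)).card = 0 then m - 1 else m)
      else min (A.filter (G.Adj v)).card m := by
  by_cases hv : v ∈ A <;> simp [mPot, hv] <;> split_ifs <;>
    first | omega | simp_all [Finset.nonempty_iff_ne_empty]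

lemma card_filter_mono {A B : Finset V} (h : A ⊆ B) (v : V) :
    (A.filter (G.Adj v)).card ≤ (B.filter (G.Adj v)).card :=
  card_le_card (filter_subset_filter _ h)

lemma card_insert_filter {A : Finset V} {x : V} (hx : x ∉ A) (v : V) :
    ((insert x A).filter (G.Adj v)).card
      = (A.filter (G.Adj v)).card + (if G.Adj v x then 1 else 0) := by
  rw [filter_insert]
  split_ifs with h
  · rw [card_insert_of_notMem (fun hmem => hx (mem_filter.mp hmem).1)]
  · simp

lemma mPot_mono (m : ℕ) {A B : Finset V} (h : A ⊆ B) (v : V) :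
    mPot G m A v ≤ mPot G m B v := by
  have hc := card_filter_mono G h v
  rw [mPot_eq, mPot_eq]
  by_cases hvA : v ∈ A
  · have hvB : v ∈ B := h hvA
    simp only [hvA, hvB, if_pos]
    split_ifs <;> omega
  · by_cases hvB : v ∈ B <;> simp only [hvA, hvB, if_pos, if_neg, not_false_iff]
    · split_ifs <;> omega
    · omega

lemma mPot_submod (m : ℕ) (hm : 1 ≤ m) {A B : Finset V} (h : A ⊆ B) {x : V} (hx : x ∉ B)
    (v : V) :
    mPot G m (insert x B) v + mPot G m A v ≤ mPot G m (insert x A) v + mPot G m B v := by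
  have hxA : x ∉ A := fun hmem => hx (h hmem)
  have hc := card_filter_mono G h v
  rw [mPot_eq, mPot_eq, mPot_eq, mPot_eq, card_insert_filter G hx, card_insert_filter G hxA]
  by_cases hvx : v = x
  · subst hvx
    simp only [mem_insert, true_or, if_pos, hxA, hx, if_neg, not_false_iff, G.irrefl,
      if_false, add_zero]
    split_ifs <;> omega
  · simp only [mem_insert, hvx, false_or]
    by_cases hvA : v ∈ A
    · have hvB : v ∈ B := h hvA
      simp only [hvA, hvB, if_pos]
      split_ifs <;> omega
    · by_cases hvB : v ∈ B <;> simp only [hvA, hvB, if_pos, if_neg, not_false_iff] <;>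
        split_ifs <;> omega

end Aux

/-- the fault-tolerant total domination potential is monotone
non-decreasing and submodular. -/
theorem stmt11 {V : Type*} [Fintype V] [DecidableEq V]
    (G : SimpleGraph V) [DecidableRel G.Adj] (m : ℕ) (hm : 1 ≤ m) :
    (∀ A B : Finset V, A ⊆ B → fFT G m A ≤ fFT G m B) ∧
    (∀ A B : Finset V, A ⊆ B → ∀ x ∉ B,
      fFT G m (insert x B) - fFT G m B ≤ fFT G m (insert x A) - fFT G m A) := by
  constructor
  · intro A B hAB
    apply Finset.sum_le_sum
    intro v _
    exact_mod_cast mPot_mono G m hAB v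
  · intro A B hAB x hx
    have hN : (∑ v, mPot G m (insert x B) v) + ∑ v, mPot G m A v
        ≤ (∑ v, mPot G m (insert x A) v) + ∑ v, mPot G m B v := by
      rw [← Finset.sum_add_distrib, ← Finset.sum_add_distrib]
      exact Finset.sum_le_sum fun v _ => mPot_submod G m hm hAB hx v
    have hR : ((∑ v, mPot G m (insert x B) v : ℕ) : ℝ) + (∑ v, mPot G m A v : ℕ)
        ≤ ((∑ v, mPot G m (insert x A) v : ℕ) : ℝ) + (∑ v, mPot G m B v : ℕ) := by
      exact_mod_cast hN
    push_cast at hR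
    simp only [fFT]
    linarith
end

section
/- The WPPIDS potential h(A) = Σ_{v∈V} h_A(v), where h_A(v) = W(v)/2 if v ∈ A or W_A(v) ≥ W(v)/2, and h_A(v) = W_A(v) otherwise, is monotone non-decreasing and submodular on subsets of V. -/
open Finset

/-- W_A(v) = sum of weights of edges from v to its neighbors in A. -/
def WgtR {V : Type*} [Fintype V] [DecidableEq V]
    (G : SimpleGraph V) [DecidableRel G.Adj] (w : V → V → ℝ)
    (A : Finset V) (v : V) : ℝ :=
  ∑ u ∈ A.filter (G.Adj v), w v u

/-- Per-vertex WPPIDS potential: h_A(v) = W(v)/2 if v ∈ A or W_A(v) ≥ W(v)/2,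
else W_A(v). -/
noncomputable def hAux {V : Type*} [Fintype V] [DecidableEq V]
    (G : SimpleGraph V) [DecidableRel G.Adj] (w : V → V → ℝ)
    (A : Finset V) (v : V) : ℝ :=
  if v ∈ A ∨ WgtR G w univ v / 2 ≤ WgtR G w A v then WgtR G w univ v / 2
  else WgtR G w A v

/-- WPPIDS potential h(A) = Σ_v h_A(v). -/
noncomputable def hPot {V : Type*} [Fintype V] [DecidableEq V]
    (G : SimpleGraph V) [DecidableRel G.Adj] (w : V → V → ℝ)
    (A : Finset V) : ℝ :=
  ∑ v, hAux G w A v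

section Aux

variable {V : Type*} [Fintype V] [DecidableEq V]
    (G : SimpleGraph V) [DecidableRel G.Adj] (w : V → V → ℝ)

lemma wgt_mono (hpos : ∀ u v : V, G.Adj u v → 0 < w u v)
    {A B : Finset V} (hAB : A ⊆ B) (v : V) :
    WgtR G w A v ≤ WgtR G w B v := by
  apply Finset.sum_le_sum_of_subset_of_nonneg
  · exact Finset.filter_subset_filter _ hAB
  · intro u hu _
    exact (hpos v u (Finset.mem_filter.mp hu).2).le

lemma wgt_insert {A : Finset V} {x : V} (hx : x ∉ A) (v : V) :
    WgtR G w (insert x A) v =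
      WgtR G w A v + (if G.Adj v x then w v x else 0) := by
  unfold WgtR
  rw [Finset.filter_insert]
  split_ifs with h
  · rw [Finset.sum_insert (by simp [hx])]; ring
  · ring

lemma hAux_eq (A : Finset V) (v : V) :
    hAux G w A v = if v ∈ A then WgtR G w univ v / 2
      else min (WgtR G w univ v / 2) (WgtR G w A v) := by
  rcases em (v ∈ A) with h | h <;> simp [hAux, h, min_def]

lemma hAux_mono (hpos : ∀ u v : V, G.Adj u v → 0 < w u v)
    {A B : Finset V} (hAB : A ⊆ B) (v : V) :
    hAux G w A v ≤ hAux G w B v := by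
  rw [hAux_eq, hAux_eq]
  rcases em (v ∈ A) with h | h
  · simp [h, hAB h]
  · rcases em (v ∈ B) with h' | h'
    · simp [h, h', min_le_left]
    · simp only [h, h', if_false]
      exact min_le_min le_rfl (wgt_mono G w hpos hAB v)

lemma min_concave {c a b d : ℝ} (hab : a ≤ b) (hd : 0 ≤ d) :
    min c (b + d) - min c b ≤ min c (a + d) - min c a := by
  simp only [min_def]
  split_ifs <;> linarith

lemma hAux_submod (hpos : ∀ u v : V, G.Adj u v → 0 < w u v)
    {A B : Finset V} (hAB : A ⊆ B) (x v : V) :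
    hAux G w (insert x B) v - hAux G w B v ≤
      hAux G w (insert x A) v - hAux G w A v := by
  rcases em (x ∈ B) with hxB | hxB
  · rw [Finset.insert_eq_self.mpr hxB]
    have := hAux_mono G w hpos (Finset.subset_insert x A) v
    linarith
  · have hxA : x ∉ A := fun h => hxB (hAB h)
    rcases em (v = x) with rfl | hvx
    · rw [hAux_eq G w (insert v B), hAux_eq G w (insert v A)]
      simp only [Finset.mem_insert, true_or, if_true]
      have := hAux_mono G w hpos hAB v
      linarith
    · have d0 : (0:ℝ) ≤ if G.Adj v x then w v x else 0 := by
        split_ifs with h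
        · exact (hpos v x h).le
        · exact le_rfl
      rw [hAux_eq, hAux_eq, hAux_eq, hAux_eq,
        wgt_insert G w hxB v, wgt_insert G w hxA v]
      have hmemB : v ∈ insert x B ↔ v ∈ B := by simp [hvx]
      have hmemA : v ∈ insert x A ↔ v ∈ A := by simp [hvx]
      rcases em (v ∈ A) with hA | hA
      · simp [hA, hAB hA, hmemA, hmemB]
      · rcases em (v ∈ B) with hB | hB
        · simp only [hA, hB, hmemA, hmemB, if_true, if_false]
          have h1 : min (WgtR G w univ v / 2) (WgtR G w A v) ≤
              min (WgtR G w univ v / 2)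
                (WgtR G w A v + if G.Adj v x then w v x else 0) :=
            min_le_min le_rfl (by linarith)
          linarith
        · simp only [hmemA, hmemB, hA, hB, if_false]
          exact min_concave (wgt_mono G w hpos hAB v) d0

end Aux

/-- the WPPIDS potential is monotone non-decreasing and
submodular. -/
theorem stmt14 {V : Type*} [Fintype V] [DecidableEq V]
    (G : SimpleGraph V) [DecidableRel G.Adj] (w : V → V → ℝ)
    (hpos : ∀ u v : V, G.Adj u v → 0 < w u v) :
    (∀ A B : Finset V, A ⊆ B → hPot G w A ≤ hPot G w B) ∧
    (∀ A B : Finset V, A ⊆ B → ∀ x : V,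
      hPot G w (insert x B) - hPot G w B ≤
        hPot G w (insert x A) - hPot G w A) := by
  constructor
  · intro A B hAB
    exact Finset.sum_le_sum fun v _ => hAux_mono G w hpos hAB v
  · intro A B hAB x
    unfold hPot
    rw [← Finset.sum_sub_distrib, ← Finset.sum_sub_distrib]
    exact Finset.sum_le_sum fun v _ => hAux_submod G w hpos hAB x v
end

section
/- A set S ⊆ V is a weighted partial positive influence dominating set (for every v ∈ V \ S, W_S(v) ≥ W(v)/2) if and only if h(S) = Σ_{v∈V} W(v)/2, where h(A) = Σ_{v∈V} h_A(v); moreover Σ_{v∈V} W(v)/2 = h(V) is the maximum value of h. -/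
open Finset

lemma hAux_le {V : Type*} [Fintype V] [DecidableEq V]
    (G : SimpleGraph V) [DecidableRel G.Adj] (w : V → V → ℝ)
    (A : Finset V) (v : V) : hAux G w A v ≤ WgtR G w univ v / 2 := by
  unfold hAux
  split
  · exact le_rfl
  · next h =>
      push_neg at h
      exact le_of_lt h.2

/-- S is a WPPIDS iff h(S) = Σ_v W(v)/2; moreover this value
equals h(V) and is the maximum of h. -/
theorem stmt15 {V : Type*} [Fintype V] [DecidableEq V]
    (G : SimpleGraph V) [DecidableRel G.Adj] (w : V → V → ℝ)
    (hpos : ∀ u v : V, G.Adj u v → 0 < w u v) (S : Finset V) :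
    ((∀ v ∉ S, WgtR G w univ v / 2 ≤ WgtR G w S v) ↔
      hPot G w S = ∑ v, WgtR G w univ v / 2) ∧
    hPot G w univ = (∑ v, WgtR G w univ v / 2) ∧
    (∀ A : Finset V, hPot G w A ≤ ∑ v, WgtR G w univ v / 2) := by
  refine ⟨⟨fun h => ?_, fun h v hv => ?_⟩, ?_, fun A => ?_⟩
  · unfold hPot
    apply Finset.sum_congr rfl
    intro v _
    unfold hAux
    rw [if_pos]
    by_cases hv : v ∈ S
    · exact Or.inl hv
    · exact Or.inr (h v hv)
  · have heq := (Finset.sum_eq_sum_iff_of_le (fun v _ => hAux_le G w S v)).mp h v (mem_univ v)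
    by_contra hc
    unfold hAux at heq
    rw [if_neg] at heq
    · push_neg at hc; linarith
    · push_neg; exact ⟨hv, by push_neg at hc; exact hc⟩
  · unfold hPot
    apply Finset.sum_congr rfl
    intro v _
    unfold hAux
    rw [if_pos (Or.inl (mem_univ v))]
  · exact Finset.sum_le_sum (fun v _ => hAux_le G w A v)
end

section
/- A set S ⊆ V is a weighted partial positive influence connected dominating set (S is a WPPIDS and the subgraph induced by S is connected) if and only if f(S) = h_max + (|V| − 2)/L, where f(A) = h(A) + (1/L)(|V| − q(A) − p(A)) and h_max = Σ_{v∈V} W(v)/2. -/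
open Finset

/-- W_A(v) = sum of weights of edges from v to its neighbors in A (ℚ-weights). -/
def WgtQ {V : Type*} [Fintype V] [DecidableEq V]
    (G : SimpleGraph V) [DecidableRel G.Adj] (w : V → V → ℚ)
    (A : Finset V) (v : V) : ℚ :=
  ∑ u ∈ A.filter (G.Adj v), w v u

/-- Per-vertex WPPIDS potential (ℚ-valued). -/
def hAuxQ {V : Type*} [Fintype V] [DecidableEq V]
    (G : SimpleGraph V) [DecidableRel G.Adj] (w : V → V → ℚ)
    (A : Finset V) (v : V) : ℚ :=
  if v ∈ A ∨ WgtQ G w univ v / 2 ≤ WgtQ G w A v then WgtQ G w univ v / 2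
  else WgtQ G w A v

/-- WPPIDS potential h(A) = Σ_v h_A(v). -/
def hPotQ {V : Type*} [Fintype V] [DecidableEq V]
    (G : SimpleGraph V) [DecidableRel G.Adj] (w : V → V → ℚ)
    (A : Finset V) : ℚ :=
  ∑ v, hAuxQ G w A v

/-- l(v): lcm of the denominators of W(v)/2 and of the incident edge weights. -/
def lv {V : Type*} [Fintype V] [DecidableEq V]
    (G : SimpleGraph V) [DecidableRel G.Adj] (w : V → V → ℚ) (v : V) : ℕ :=
  (insert (WgtQ G w univ v / 2).den
      ((univ.filter (G.Adj v)).image fun u => (w v u).den)).lcm id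

/-- L = max_v l(v). -/
def Lval {V : Type*} [Fintype V] [DecidableEq V]
    (G : SimpleGraph V) [DecidableRel G.Adj] (w : V → V → ℚ) : ℕ :=
  univ.sup (lv G w)

/-- p(A): number of connected components of the subgraph induced by A. -/
noncomputable def pNum {V : Type*} [Fintype V] [DecidableEq V]
    (G : SimpleGraph V) [DecidableRel G.Adj] (A : Finset V) : ℕ :=
  Nat.card (G.induce (A : Set V)).ConnectedComponent

/-- The spanning subgraph of G keeping the edges with at least one endpoint
in A. -/
def qGraph {V : Type*} [Fintype V] [DecidableEq V]
    (G : SimpleGraph V) [DecidableRel G.Adj] (A : Finset V) : SimpleGraph V where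
  Adj u v := G.Adj u v ∧ (u ∈ A ∨ v ∈ A)
  symm := by
    constructor
    intro u v h
    exact ⟨h.1.symm, h.2.symm⟩
  loopless := by
    constructor
    intro v h
    exact G.irrefl h.1

/-- q(A): number of connected components of that spanning subgraph. -/
noncomputable def qNum {V : Type*} [Fintype V] [DecidableEq V]
    (G : SimpleGraph V) [DecidableRel G.Adj] (A : Finset V) : ℕ :=
  Nat.card (qGraph G A).ConnectedComponent

/-- WPPICDS potential f(A) = h(A) + (1/L)(|V| − q(A) − p(A)). -/
noncomputable def fCon {V : Type*} [Fintype V] [DecidableEq V]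
    (G : SimpleGraph V) [DecidableRel G.Adj] (w : V → V → ℚ)
    (A : Finset V) : ℚ :=
  hPotQ G w A +
    (1 / (Lval G w : ℚ)) *
      ((Fintype.card V : ℚ) - (qNum G A : ℚ) - (pNum G A : ℚ))


section AuxLemmas
set_option linter.unusedSectionVars false

lemma int_mul_of_den_dvd {q : ℚ} {d : ℕ} (h : q.den ∣ d) : ∃ z : ℤ, (d : ℚ) * q = z := by
  obtain ⟨k, hk⟩ := h
  refine ⟨q.num * k, ?_⟩
  have h2 := Rat.mul_den_eq_num q
  subst hk
  push_cast
  linear_combination (k : ℚ) * h2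

lemma card_cc_eq_one_iff {α : Type*} [Finite α] (H : SimpleGraph α) :
    Nat.card H.ConnectedComponent = 1 ↔ H.Connected := by
  rw [Nat.card_eq_one_iff_unique]
  constructor
  · rintro ⟨hs, ⟨c⟩⟩
    obtain ⟨a, -⟩ := c.exists_rep
    rw [SimpleGraph.connected_iff]
    refine ⟨fun u v => ?_, ⟨a⟩⟩
    exact SimpleGraph.ConnectedComponent.exact
      (Subsingleton.elim (H.connectedComponentMk u) (H.connectedComponentMk v))
  · intro hc
    haveI := hc.nonempty
    refine ⟨⟨fun c d => ?_⟩, ⟨H.connectedComponentMk (Classical.arbitrary _)⟩⟩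
    · obtain ⟨u, rfl⟩ := c.exists_rep
      obtain ⟨v, rfl⟩ := d.exists_rep
      exact SimpleGraph.ConnectedComponent.sound (hc.preconnected u v)

variable {V : Type*} [Fintype V] [DecidableEq V]
    (G : SimpleGraph V) [DecidableRel G.Adj] (w : V → V → ℚ)

lemma exists_adj (hconn : G.Connected) (hcard : 2 ≤ Fintype.card V) (v : V) :
    ∃ u, G.Adj v u := by
  obtain ⟨u, hu⟩ := Fintype.exists_ne_of_one_lt_card (by omega) v
  obtain ⟨p⟩ := hconn.preconnected v u
  cases p with
  | nil => exact absurd rfl hu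
  | cons h _ => exact ⟨_, h⟩

lemma WgtQ_nonneg (hpos : ∀ u v : V, G.Adj u v → 0 < w u v) (A : Finset V) (v : V) :
    0 ≤ WgtQ G w A v :=
  Finset.sum_nonneg fun u hu => (hpos v u (Finset.mem_filter.mp hu).2).le

lemma WgtQ_univ_pos (hconn : G.Connected) (hcard : 2 ≤ Fintype.card V)
    (hpos : ∀ u v : V, G.Adj u v → 0 < w u v) (v : V) :
    0 < WgtQ G w univ v := by
  obtain ⟨u, hu⟩ := exists_adj G hconn hcard v
  exact Finset.sum_pos (fun x hx => hpos v x (Finset.mem_filter.mp hx).2)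
    ⟨u, Finset.mem_filter.mpr ⟨mem_univ u, hu⟩⟩

lemma hAux_le_s19 (A : Finset V) (v : V) :
    hAuxQ G w A v ≤ WgtQ G w univ v / 2 := by
  unfold hAuxQ
  split
  · exact le_refl _
  · next h =>
    push_neg at h
    exact h.2.le

lemma lv_pos (v : V) : 0 < lv G w v := by
  rw [Nat.pos_iff_ne_zero]
  intro h
  unfold lv at h
  rw [Finset.lcm_eq_zero_iff] at h
  simp only [Set.mem_image, id] at h
  obtain ⟨x, hx, hx0⟩ := h
  simp only [Finset.coe_insert, Set.mem_insert_iff, Finset.coe_image, Set.mem_image, Finset.mem_coe, Finset.mem_insert, Finset.mem_image] at hx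
  rcases hx with h1 | ⟨u, _, h2⟩
  · exact (Rat.den_pos _).ne' (h1 ▸ hx0)
  · exact (Rat.den_pos _).ne' (h2 ▸ hx0)

lemma lv_le_L (v : V) : lv G w v ≤ Lval G w := Finset.le_sup (mem_univ v)

lemma L_pos [Nonempty V] : 0 < Lval G w :=
  lt_of_lt_of_le (lv_pos G w (Classical.arbitrary V)) (lv_le_L G w _)

lemma int_mul_lv_half (v : V) : ∃ z : ℤ, (lv G w v : ℚ) * (WgtQ G w univ v / 2) = z :=
  int_mul_of_den_dvd (Finset.dvd_lcm (Finset.mem_insert_self _ _))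

lemma int_mul_lv_wgt (A : Finset V) (v : V) :
    ∃ z : ℤ, (lv G w v : ℚ) * WgtQ G w A v = z := by
  have key : ∀ u ∈ A.filter (G.Adj v), ∃ z : ℤ, (lv G w v : ℚ) * w v u = z := by
    intro u hu
    refine int_mul_of_den_dvd (Finset.dvd_lcm ?_)
    refine Finset.mem_insert_of_mem (Finset.mem_image.mpr ⟨u, ?_, rfl⟩)
    exact Finset.mem_filter.mpr ⟨mem_univ u, (Finset.mem_filter.mp hu).2⟩
  choose g hg using key
  refine ⟨∑ u ∈ (A.filter (G.Adj v)).attach, g u u.2, ?_⟩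
  rw [WgtQ, ← Finset.sum_attach (A.filter (G.Adj v)) (fun u => w v u), Finset.mul_sum]
  push_cast
  exact Finset.sum_congr rfl fun u _ => hg u u.2

lemma gap_ge (A : Finset V) (v : V) (h : WgtQ G w A v < WgtQ G w univ v / 2) :
    1 / (Lval G w : ℚ) ≤ WgtQ G w univ v / 2 - WgtQ G w A v := by
  obtain ⟨z1, hz1⟩ := int_mul_lv_half G w v
  obtain ⟨z2, hz2⟩ := int_mul_lv_wgt G w A v
  have hlv : (0:ℚ) < (lv G w v : ℚ) := by exact_mod_cast lv_pos G w v
  have hL : (0:ℚ) < (Lval G w : ℚ) := by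
    have := lt_of_lt_of_le (lv_pos G w v) (lv_le_L G w v)
    exact_mod_cast this
  have hd : (lv G w v : ℚ) * (WgtQ G w univ v / 2 - WgtQ G w A v) = ((z1 - z2 : ℤ) : ℚ) := by
    push_cast; rw [mul_sub, hz1, hz2]
  have hzpos : (0:ℚ) < ((z1 - z2 : ℤ) : ℚ) := by
    rw [← hd]; exact mul_pos hlv (by linarith)
  have hz1' : (1:ℤ) ≤ z1 - z2 := by exact_mod_cast hzpos
  have h1 : (1:ℚ) ≤ (lv G w v : ℚ) * (WgtQ G w univ v / 2 - WgtQ G w A v) := by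
    rw [hd]; exact_mod_cast hz1'
  have hle : (lv G w v : ℚ) ≤ (Lval G w : ℚ) := by exact_mod_cast lv_le_L G w v
  rw [div_le_iff₀ hL]
  calc (1:ℚ) ≤ (lv G w v : ℚ) * (WgtQ G w univ v / 2 - WgtQ G w A v) := h1
    _ ≤ (Lval G w : ℚ) * (WgtQ G w univ v / 2 - WgtQ G w A v) := by
        apply mul_le_mul_of_nonneg_right hle; linarith
    _ = (WgtQ G w univ v / 2 - WgtQ G w A v) * (Lval G w : ℚ) := mul_comm _ _

lemma pNum_pos {S : Finset V} (hS : S.Nonempty) : 1 ≤ pNum G S := by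
  obtain ⟨v, hv⟩ := hS
  have : Nonempty (G.induce (S : Set V)).ConnectedComponent :=
    ⟨(G.induce (S : Set V)).connectedComponentMk ⟨v, hv⟩⟩
  exact Nat.card_pos

lemma qNum_pos [Nonempty V] (S : Finset V) : 1 ≤ qNum G S := by
  have : Nonempty (qGraph G S).ConnectedComponent :=
    ⟨(qGraph G S).connectedComponentMk (Classical.arbitrary V)⟩
  exact Nat.card_pos

lemma qNum_empty (hcard : 2 ≤ Fintype.card V) : 2 ≤ qNum G ∅ := by
  have hbot : qGraph G ∅ = ⊥ := by
    ext u v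
    simp [qGraph]
  obtain ⟨u, v, huv⟩ := Fintype.exists_pair_of_one_lt_card (α := V) (by omega)
  have : Nontrivial (qGraph G ∅).ConnectedComponent := by
    refine ⟨(qGraph G ∅).connectedComponentMk u, (qGraph G ∅).connectedComponentMk v, fun h => ?_⟩
    have := SimpleGraph.ConnectedComponent.exact h
    rw [hbot, SimpleGraph.reachable_bot] at this
    exact huv this
  exact Finite.one_lt_card

lemma qGraph_connected {S : Finset V}
    (hdom : ∀ v ∉ S, ∃ u ∈ S, G.Adj v u)
    (hC : (G.induce (S : Set V)).Connected) : (qGraph G S).Connected := by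
  haveI hni := hC.nonempty
  haveI hne : Nonempty V := ⟨(Classical.arbitrary (S : Set V)).1⟩
  have hSne : ∀ s ∈ S, ∀ t ∈ S, (qGraph G S).Reachable s t := by
    intro s hs t ht
    have hr : (G.induce (S : Set V)).Reachable ⟨s, hs⟩ ⟨t, ht⟩ := hC.preconnected _ _
    exact SimpleGraph.Reachable.map
      (⟨fun x => x.1, fun {a b} hab => ⟨hab, Or.inl a.2⟩⟩ : G.induce (S : Set V) →g qGraph G S) hr
  have hstep : ∀ v : V, ∃ s ∈ S, (qGraph G S).Reachable v s := by
    intro v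
    by_cases hv : v ∈ S
    · exact ⟨v, hv, SimpleGraph.Reachable.refl v⟩
    · obtain ⟨u, hu, hadj⟩ := hdom v hv
      exact ⟨u, hu, SimpleGraph.Adj.reachable ⟨hadj, Or.inr hu⟩⟩
  rw [SimpleGraph.connected_iff]
  refine ⟨fun u v => ?_, hne⟩
  obtain ⟨su, hsu, hru⟩ := hstep u
  obtain ⟨sv, hsv, hrv⟩ := hstep v
  exact (hru.trans (hSne su hsu sv hsv)).trans hrv.symm

end AuxLemmas

/-- S is a WPPICDS (a WPPIDS inducing a connected subgraph)
iff f(S) = h_max + (|V| − 2)/L, where h_max = Σ_v W(v)/2. -/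
theorem stmt19 {V : Type*} [Fintype V] [DecidableEq V]
    (G : SimpleGraph V) [DecidableRel G.Adj]
    (hconn : G.Connected) (hcard : 2 ≤ Fintype.card V)
    (w : V → V → ℚ) (hpos : ∀ u v : V, G.Adj u v → 0 < w u v)
    (S : Finset V) :
    ((∀ v ∉ S, WgtQ G w univ v / 2 ≤ WgtQ G w S v) ∧
        (G.induce (S : Set V)).Connected) ↔
      fCon G w S =
        (∑ v, WgtQ G w univ v / 2) +
          ((Fintype.card V : ℚ) - 2) / (Lval G w : ℚ) := by
  haveI hne : Nonempty V := Fintype.card_pos_iff.mp (by omega)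
  have hLpos : (0:ℚ) < (Lval G w : ℚ) := by exact_mod_cast L_pos G w
  have hL0 : (Lval G w : ℚ) ≠ 0 := hLpos.ne'
  constructor
  · rintro ⟨hW, hC⟩
    have hdom : ∀ v ∉ S, ∃ u ∈ S, G.Adj v u := by
      intro v hv
      have h1 := hW v hv
      have h2 := WgtQ_univ_pos G w hconn hcard hpos v
      have h3 : 0 < WgtQ G w S v := by linarith
      by_contra hcon
      push_neg at hcon
      have hfe : S.filter (G.Adj v) = ∅ :=
        Finset.filter_eq_empty_iff.mpr (fun {u} hu => hcon u hu)
      rw [WgtQ, hfe, Finset.sum_empty] at h3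
      exact lt_irrefl _ h3
    have hp : pNum G S = 1 := (card_cc_eq_one_iff _).mpr hC
    have hq : qNum G S = 1 := (card_cc_eq_one_iff _).mpr (qGraph_connected G hdom hC)
    have hh : hPotQ G w S = ∑ v, WgtQ G w univ v / 2 := by
      refine Finset.sum_congr rfl fun v _ => ?_
      unfold hAuxQ
      by_cases hv : v ∈ S
      · rw [if_pos (Or.inl hv)]
      · rw [if_pos (Or.inr (hW v hv))]
    rw [fCon, hh, hp, hq]
    push_cast
    field_simp
    ring
  · intro heq
    rw [fCon] at heq
    have heq2 : (Lval G w : ℚ) * ((∑ v, WgtQ G w univ v / 2) - hPotQ G w S)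
        = 2 - (qNum G S : ℚ) - (pNum G S : ℚ) := by
      field_simp at heq
      linarith
    have hsum2 : 2 ≤ qNum G S + pNum G S := by
      rcases S.eq_empty_or_nonempty with rfl | hSne
      · have := qNum_empty G hcard
        omega
      · have h1 := qNum_pos G S
        have h2 := pNum_pos G hSne
        omega
    by_cases hD : hPotQ G w S = ∑ v, WgtQ G w univ v / 2
    · -- potential is maximal
      have hAeq : ∀ v, hAuxQ G w S v = WgtQ G w univ v / 2 := by
        by_contra hcon
        push_neg at hcon
        obtain ⟨v, hv⟩ := hcon
        have hlt : hAuxQ G w S v < WgtQ G w univ v / 2 :=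
          lt_of_le_of_ne (hAux_le_s19 G w S v) hv
        have : hPotQ G w S < ∑ v, WgtQ G w univ v / 2 :=
          Finset.sum_lt_sum (fun i _ => hAux_le_s19 G w S i) ⟨v, mem_univ v, hlt⟩
        exact absurd hD (ne_of_lt this)
      have hW : ∀ v ∉ S, WgtQ G w univ v / 2 ≤ WgtQ G w S v := by
        intro v hv
        have h := hAeq v
        unfold hAuxQ at h
        split at h
        · next hcond =>
          rcases hcond with h1 | h2
          · exact absurd h1 hv
          · exact h2
        · next hcond =>
          push_neg at hcond
          exact absurd h (ne_of_lt hcond.2)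
      have hSne : S.Nonempty := by
        rcases S.eq_empty_or_nonempty with rfl | h
        · exfalso
          obtain ⟨v⟩ := hne
          have h1 := hW v (Finset.notMem_empty v)
          have h2 := WgtQ_univ_pos G w hconn hcard hpos v
          have h3 : WgtQ G w (∅ : Finset V) v = 0 := by
            rw [WgtQ, Finset.filter_empty, Finset.sum_empty]
          rw [h3] at h1
          linarith
        · exact h
      have hqp : (qNum G S : ℚ) + (pNum G S : ℚ) = 2 := by
        rw [hD] at heq2
        rw [sub_self, mul_zero] at heq2
        linarith
      have hqp' : qNum G S + pNum G S = 2 := by exact_mod_cast hqp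
      have h1 := qNum_pos G S
      have h2 := pNum_pos G hSne
      have hp1 : pNum G S = 1 := by omega
      exact ⟨hW, (card_cc_eq_one_iff _).mp hp1⟩
    · -- potential is not maximal: contradiction
      exfalso
      have hlt : ∃ v, v ∉ S ∧ WgtQ G w S v < WgtQ G w univ v / 2 := by
        by_contra hcon
        push_neg at hcon
        apply hD
        refine Finset.sum_congr rfl fun v _ => ?_
        unfold hAuxQ
        split
        · rfl
        · next hcond =>
          push_neg at hcond
          exact absurd hcond.2 (not_lt.mpr (hcon v hcond.1))
      obtain ⟨v, hvS, hvlt⟩ := hlt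
      have hgap := gap_ge G w S v hvlt
      have hAv : hAuxQ G w S v = WgtQ G w S v := by
        unfold hAuxQ
        rw [if_neg]
        push_neg
        exact ⟨hvS, hvlt⟩
      have hterm : 1 / (Lval G w : ℚ) ≤ WgtQ G w univ v / 2 - hAuxQ G w S v := by
        rw [hAv]; linarith
      have hsumge : 1 / (Lval G w : ℚ) ≤ (∑ u, WgtQ G w univ u / 2) - hPotQ G w S := by
        have hsplit : (∑ u, WgtQ G w univ u / 2) - hPotQ G w S
            = ∑ u, (WgtQ G w univ u / 2 - hAuxQ G w S u) := by
          rw [hPotQ, ← Finset.sum_sub_distrib]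
        rw [hsplit]
        calc 1 / (Lval G w : ℚ) ≤ WgtQ G w univ v / 2 - hAuxQ G w S v := hterm
          _ ≤ ∑ u, (WgtQ G w univ u / 2 - hAuxQ G w S u) :=
            Finset.single_le_sum (f := fun u => WgtQ G w univ u / 2 - hAuxQ G w S u)
              (fun i _ => by linarith [hAux_le_s19 G w S i]) (mem_univ v)
      have hmul : (1:ℚ) ≤ (Lval G w : ℚ) * ((∑ u, WgtQ G w univ u / 2) - hPotQ G w S) := by
        have h := mul_le_mul_of_nonneg_left hsumge hLpos.le
        rw [mul_one_div, div_self hL0] at h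
        exact h
      have hc : (2:ℚ) ≤ (qNum G S : ℚ) + (pNum G S : ℚ) := by exact_mod_cast hsum2
      linarith [heq2]
end
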